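/- Let 𝒢 be a finite two-player strategic game with move sets M₀, M₁ and utility functions u₀, u₁ : M₀ × M₁ → V for a finite linearly ordered set V, and let Env_𝒢 be its environment encoding. Then 𝒢 has a pure Nash equilibrium if and only if Env_𝒢, Σ^{unif,det}(Env_𝒢) ⊨ ¬D_∅¬(BR₀ ∧ BR₁), i.e., the formula ¬D_∅¬(BR₀ ∧ BR₁) holds at (r,0) for every run r of I(Env_𝒢, Σ^{unif,det}(Env_𝒢)). -/

import Mathlib

namespace Paper

open Classical

/-- An environment for a set of agents. -/
structure Env (Agent State Obs Act PropV : Type) where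
  init : Set State
  acts : Agent → Set Act
  trans : State → (Agent → Act) → State → Prop
  obs : Agent → State → Obs
  val : State → Set PropV
  acts_ne : ∀ i, (acts i).Nonempty
  serial : ∀ s a, (∀ i, a i ∈ acts i) → ∃ t, trans s a t

variable {Agent State Obs Act PropV Var Gl Idx Loc : Type}

/-- A strategy: a choice of a set of actions at each state. -/
abbrev Strategy (State Act : Type) := State → Set Act

def IsStrategy (E : Env Agent State Obs Act PropV) (i : Agent) (α : Strategy State Act) : Prop :=
  ∀ s, (α s).Nonempty ∧ α s ⊆ E.acts i

def UniformStrat (E : Env Agent State Obs Act PropV) (i : Agent) (α : Strategy State Act) : Prop :=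
  ∀ s t, E.obs i s = E.obs i t → α s = α t

def DetStrat (α : Strategy State Act) : Prop := ∀ s, ∃ a, α s = {a}

abbrev JointStrategy (Agent State Act : Type) := Agent → Strategy State Act

def IsJoint (E : Env Agent State Obs Act PropV) (α : JointStrategy Agent State Act) : Prop :=
  ∀ i, IsStrategy E i (α i)

/-- The set of all locally uniform joint strategies. -/
def SigmaUnif (E : Env Agent State Obs Act PropV) : Set (JointStrategy Agent State Act) :=
  {α | ∀ i, IsStrategy E i (α i) ∧ UniformStrat E i (α i)}

/-- The set of all locally uniform deterministic joint strategies. -/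
def SigmaUnifDet (E : Env Agent State Obs Act PropV) : Set (JointStrategy Agent State Act) :=
  {α | ∀ i, IsStrategy E i (α i) ∧ UniformStrat E i (α i) ∧ DetStrat (α i)}

/-- Indices for the components of a global state in strategy space:
the environment `e`, the basic agents, and the strategic agents `σ(i)`. -/
inductive SIdx (Agent : Type) : Type
  | env : SIdx Agent
  | ag : Agent → SIdx Agent
  | str : Agent → SIdx Agent

/-- Global states in strategy space: a state of the environment together with
a joint strategy. -/
abbrev GState (Agent State Act : Type) := State × JointStrategy Agent State Act

/-- An interpreted system: a set of runs, a local-state function giving the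
component of a global state for each index, and a propositional assignment. -/
structure IS (Gl Idx Loc PropV : Type) where
  runs : Set (ℕ → Gl)
  loc : Idx → Gl → Loc
  val : Gl → Set PropV

/-- Equality of the `i`-components of two global states. -/
def IS.sameLoc (M : IS Gl Idx Loc PropV) (i : Idx) (g g' : Gl) : Prop := M.loc i g = M.loc i g'

/-- Syntax of the extended temporal epistemic logic ETL/ESL. -/
inductive ESL (Idx PropV Var : Type) : Type
  | tt : ESL Idx PropV Var
  | atom (p : PropV) : ESL Idx PropV Var
  | neg (φ : ESL Idx PropV Var) : ESL Idx PropV Var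
  | conj (φ ψ : ESL Idx PropV Var) : ESL Idx PropV Var
  | next (φ : ESL Idx PropV Var) : ESL Idx PropV Var
  | until_ (φ ψ : ESL Idx PropV Var) : ESL Idx PropV Var
  | box (φ : ESL Idx PropV Var) : ESL Idx PropV Var
  | all (φ : ESL Idx PropV Var) : ESL Idx PropV Var
  | exv (x : Var) (φ : ESL Idx PropV Var) : ESL Idx PropV Var
  | leq (i : Idx) (x : Var) : ESL Idx PropV Var
  | dk (G : Set Idx) (φ : ESL Idx PropV Var) : ESL Idx PropV Var
  | ck (G : Set Idx) (φ : ESL Idx PropV Var) : ESL Idx PropV Var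

/-- The common-knowledge reachability relation on points: the reflexive-transitive
closure of the union over `i ∈ Grp` of the "same `i`-component" relations. -/
def ckRel (M : IS Gl Idx Loc PropV) (Grp : Set Idx) :
    ((ℕ → Gl) × ℕ) → ((ℕ → Gl) × ℕ) → Prop :=
  Relation.ReflTransGen (fun p q => q.1 ∈ M.runs ∧ ∃ i ∈ Grp, M.sameLoc i (p.1 p.2) (q.1 q.2))

variable [DecidableEq Var]

/-- Satisfaction of an ESL formula at a point `(r,m)` of an interpreted system,
relative to a context `Γ` interpreting variables as global states. -/
def esat (M : IS Gl Idx Loc PropV) : ESL Idx PropV Var → (Var → Gl) → (ℕ → Gl) → ℕ → Prop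
  | .tt, _, _, _ => True
  | .atom p, _, r, m => p ∈ M.val (r m)
  | .neg φ, Γ, r, m => ¬ esat M φ Γ r m
  | .conj φ ψ, Γ, r, m => esat M φ Γ r m ∧ esat M ψ Γ r m
  | .next φ, Γ, r, m => esat M φ Γ r (m+1)
  | .until_ φ ψ, Γ, r, m =>
      ∃ m', m ≤ m' ∧ esat M ψ Γ r m' ∧ ∀ k, m ≤ k → k < m' → esat M φ Γ r k
  | .box φ, Γ, r, m => ∀ m', m ≤ m' → esat M φ Γ r m'
  | .all φ, Γ, r, m => ∀ r' ∈ M.runs, (∀ k, k ≤ m → r' k = r k) → esat M φ Γ r' m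
  | .exv x φ, Γ, r, m => ∃ r' ∈ M.runs, ∃ m' : ℕ, esat M φ (Function.update Γ x (r' m')) r m
  | .leq i x, Γ, r, m => M.sameLoc i (r m) (Γ x)
  | .dk Grp φ, Γ, r, m =>
      ∀ r' ∈ M.runs, ∀ m', (∀ i ∈ Grp, M.sameLoc i (r' m') (r m)) → esat M φ Γ r' m'
  | .ck Grp φ, Γ, r, m =>
      ∀ r' ∈ M.runs, ∀ m', ckRel M Grp (r, m) (r', m') → esat M φ Γ r' m'

namespace ESL
def ff : ESL Idx PropV Var := .neg .tt
def impf (φ ψ : ESL Idx PropV Var) : ESL Idx PropV Var := .neg (.conj φ (.neg ψ))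
def orf (φ ψ : ESL Idx PropV Var) : ESL Idx PropV Var := .neg (.conj (.neg φ) (.neg ψ))
def iffF (φ ψ : ESL Idx PropV Var) : ESL Idx PropV Var := .conj (impf φ ψ) (impf ψ φ)
def EX (φ : ESL Idx PropV Var) : ESL Idx PropV Var := .neg (.all (.neg (.next φ)))
end ESL

def bigConj (l : List (ESL Idx PropV Var)) : ESL Idx PropV Var := l.foldr .conj .tt
def bigDisj (l : List (ESL Idx PropV Var)) : ESL Idx PropV Var := l.foldr ESL.orf ESL.ff

/-- The local-state function of strategy space: the `e` component is the state,
the `i` component is agent `i`'s observation, and the `σ(i)` component is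
agent `i`'s strategy. -/
def sLoc (E : Env Agent State Obs Act PropV) :
    SIdx Agent → GState Agent State Act → State ⊕ Obs ⊕ Strategy State Act
  | .env, g => Sum.inl g.1
  | .ag i, g => Sum.inr (Sum.inl (E.obs i g.1))
  | .str i, g => Sum.inr (Sum.inr (g.2 i))

/-- The runs of the strategy space `I(Env,Σ)`. -/
def IsRun (E : Env Agent State Obs Act PropV) (Sig : Set (JointStrategy Agent State Act))
    (r : ℕ → GState Agent State Act) : Prop :=
  (r 0).1 ∈ E.init ∧ (r 0).2 ∈ Sig ∧
  ∀ m, (r (m+1)).2 = (r m).2 ∧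
    ∃ a, (∀ j, a j ∈ (r m).2 j (r m).1) ∧ E.trans (r m).1 a (r (m+1)).1

/-- The strategy space interpreted system `I(Env,Σ)`. -/
def stratSpace (E : Env Agent State Obs Act PropV) (Sig : Set (JointStrategy Agent State Act)) :
    IS (GState Agent State Act) (SIdx Agent) (State ⊕ Obs ⊕ Strategy State Act) PropV :=
  { runs := {r | IsRun E Sig r}, loc := sLoc E, val := fun g => E.val g.1 }

/-- `Env[S/I]`: the environment with all states initial. -/
def Env.allInit (E : Env Agent State Obs Act PropV) : Env Agent State Obs Act PropV :=
  { E with init := Set.univ }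

end Paper
namespace Paper

variable {M0 M1 V : Type}

/-- Transitions of the game environment: play happens in the first step from
the initial state `none`, and subsequent transitions do not change the state. -/
def gameTrans : Option (M0 × M1) → (Fin 2 → M0 ⊕ M1) → Option (M0 × M1) → Prop
  | none, a, some p => a 0 = Sum.inl p.1 ∧ a 1 = Sum.inr p.2
  | none, _, none => False
  | some p, _, some q => p = q
  | some _, _, none => False

/-- The environment `Env_𝒢` encoding a two-player strategic game with move sets
`M0`, `M1` and utility functions `u0`, `u1`. The proposition `(i,v)` reads
`u_i = v`. -/
def gameEnv [Nonempty M0] [Nonempty M1] (u0 u1 : M0 → M1 → V) :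
    Env (Fin 2) (Option (M0 × M1)) Unit (M0 ⊕ M1) (Fin 2 × V) where
  init := {none}
  acts := fun i => if i = 0 then Set.range Sum.inl else Set.range Sum.inr
  trans := gameTrans
  obs := fun _ _ => ()
  val := fun s => match s with
    | none => ∅
    | some p => {x | x = (0, u0 p.1 p.2) ∨ x = (1, u1 p.1 p.2)}
  acts_ne := by
    intro i
    by_cases h : i = 0
    · simp only [if_pos h]
      exact Set.range_nonempty _
    · simp only [if_neg h]
      exact Set.range_nonempty _
  serial := by
    intro s a ha
    cases s with
    | some p => exact ⟨some p, rfl⟩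
    | none =>
        have h0 := ha 0
        have h1 := ha 1
        simp only [if_pos rfl] at h0
        have : (1 : Fin 2) ≠ 0 := by decide
        simp only [if_neg this] at h1
        obtain ⟨m0, hm0⟩ := h0
        obtain ⟨m1, hm1⟩ := h1
        exact ⟨some (m0, m1), hm0.symm, hm1.symm⟩

/-- `U_i(v) = X(u_i = v)`. -/
def Uform (i : Fin 2) (v : V) : ESL (SIdx (Fin 2)) (Fin 2 × V) Unit :=
  .next (.atom (i, v))

/-- `BR_i(v)`: `v` is attained by player `i` and, given the adversary's
strategy, is the best attainable utility. -/
noncomputable def BRv [Fintype V] [LinearOrder V] (i : Fin 2) (v : V) :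
    ESL (SIdx (Fin 2)) (Fin 2 × V) Unit :=
  .conj (Uform i v)
    (.dk {SIdx.str (1 - i)}
      (bigConj ((Finset.univ : Finset V).toList.map fun v' =>
        if v' ≤ v then ESL.tt else ESL.neg (Uform i v'))))

/-- `BR_i`: player `i` is playing a best response to the adversary's strategy. -/
noncomputable def BR [Fintype V] [LinearOrder V] (i : Fin 2) :
    ESL (SIdx (Fin 2)) (Fin 2 × V) Unit :=
  bigDisj ((Finset.univ : Finset V).toList.map fun v => BRv i v)

section GenAux
variable {Gl Idx Loc PropV Var : Type} [DecidableEq Var]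

lemma esat_bigConj (M : IS Gl Idx Loc PropV) (l : List (ESL Idx PropV Var)) (Γ : Var → Gl)
    (r : ℕ → Gl) (m : ℕ) :
    esat M (bigConj l) Γ r m ↔ ∀ φ ∈ l, esat M φ Γ r m := by
  induction l with
  | nil => simp [bigConj, esat]
  | cons φ l ih =>
    have h : esat M (bigConj (φ :: l)) Γ r m ↔
        esat M φ Γ r m ∧ esat M (bigConj l) Γ r m := Iff.rfl
    rw [h, ih]; simp

lemma esat_bigDisj (M : IS Gl Idx Loc PropV) (l : List (ESL Idx PropV Var)) (Γ : Var → Gl)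
    (r : ℕ → Gl) (m : ℕ) :
    esat M (bigDisj l) Γ r m ↔ ∃ φ ∈ l, esat M φ Γ r m := by
  induction l with
  | nil =>
    have h : esat M (bigDisj ([] : List (ESL Idx PropV Var))) Γ r m ↔ ¬ True := Iff.rfl
    simp [h]
  | cons φ l ih =>
    have h : esat M (bigDisj (φ :: l)) Γ r m ↔
        ¬ (¬ esat M φ Γ r m ∧ ¬ esat M (bigDisj l) Γ r m) := Iff.rfl
    rw [h, ih, not_and_or, not_not, not_not]
    constructor
    · rintro (h1 | ⟨ψ, hψ, h2⟩)
      · exact ⟨φ, List.mem_cons_self, h1⟩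
      · exact ⟨ψ, List.mem_cons_of_mem _ hψ, h2⟩
    · rintro ⟨ψ, hψ, h2⟩
      rcases List.mem_cons.mp hψ with rfl | hψ
      · exact Or.inl h2
      · exact Or.inr ⟨ψ, hψ, h2⟩

end GenAux
section GameAux
variable {M0 M1 V : Type}

/-- The joint strategy that constantly plays `(a,b)`. -/
def mkStrat (a : M0) (b : M1) : JointStrategy (Fin 2) (Option (M0 × M1)) (M0 ⊕ M1) :=
  fun j _ => if j = 0 then {Sum.inl a} else {Sum.inr b}

lemma mkStrat_zero (a : M0) (b : M1) :
    mkStrat a b 0 = fun _ => ({Sum.inl a} : Set (M0 ⊕ M1)) := by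
  funext s; simp [mkStrat]

lemma mkStrat_one (a : M0) (b : M1) :
    mkStrat a b 1 = fun _ => ({Sum.inr b} : Set (M0 ⊕ M1)) := by
  funext s; simp [mkStrat]

variable [Nonempty M0] [Nonempty M1] (u0 u1 : M0 → M1 → V)

lemma mkStrat_mem (a : M0) (b : M1) : mkStrat a b ∈ SigmaUnifDet (gameEnv u0 u1) := by
  intro i
  refine ⟨fun s => ?_, fun s t _ => rfl, fun s => ?_⟩
  · by_cases h : i = 0 <;>
      simp [mkStrat, gameEnv, h]
  · by_cases h : i = 0 <;> simp [mkStrat, h]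

/-- The run that constantly plays `(a,b)`. -/
def mkRun (a : M0) (b : M1) : ℕ → GState (Fin 2) (Option (M0 × M1)) (M0 ⊕ M1) :=
  fun m => (if m = 0 then none else some (a, b), mkStrat a b)

lemma mkRun_mem (a : M0) (b : M1) :
    mkRun a b ∈ (stratSpace (gameEnv u0 u1) (SigmaUnifDet (gameEnv u0 u1))).runs := by
  refine ⟨rfl, mkStrat_mem u0 u1 a b, fun m => ⟨rfl, ?_⟩⟩
  refine ⟨fun j => if j = 0 then Sum.inl a else Sum.inr b, fun j => ?_, ?_⟩
  · by_cases h : j = 0 <;> simp [mkRun, mkStrat, h]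
  · cases m with
    | zero => exact ⟨rfl, rfl⟩
    | succ m => exact rfl

lemma run_strat_const {E : Env Agent State Obs Act PropV}
    {Sig : Set (JointStrategy Agent State Act)} {r : ℕ → GState Agent State Act}
    (hr : IsRun E Sig r) (m : ℕ) : (r m).2 = (r 0).2 := by
  induction m with
  | zero => rfl
  | succ m ih => rw [(hr.2.2 m).1, ih]

lemma strat_struct {α : JointStrategy (Fin 2) (Option (M0 × M1)) (M0 ⊕ M1)}
    (hα : α ∈ SigmaUnifDet (gameEnv u0 u1)) :
    ∃ a b, α 0 = (fun _ => ({Sum.inl a} : Set (M0 ⊕ M1))) ∧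
      α 1 = (fun _ => ({Sum.inr b} : Set (M0 ⊕ M1))) := by
  obtain ⟨hs0, hu0, hd0⟩ := hα 0
  obtain ⟨hs1, hu1, hd1⟩ := hα 1
  obtain ⟨c0, hc0⟩ := hd0 none
  obtain ⟨c1, hc1⟩ := hd1 none
  have hm0 : c0 ∈ (gameEnv u0 u1).acts 0 := (hs0 none).2 (by rw [hc0]; exact rfl)
  have hm1 : c1 ∈ (gameEnv u0 u1).acts 1 := (hs1 none).2 (by rw [hc1]; exact rfl)
  have e0 : (gameEnv u0 u1).acts 0 = Set.range Sum.inl :=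
    show (if (0 : Fin 2) = 0 then Set.range Sum.inl else Set.range Sum.inr) = _ from
      if_pos rfl
  have e1 : (gameEnv u0 u1).acts 1 = Set.range Sum.inr :=
    show (if (1 : Fin 2) = 0 then Set.range Sum.inl else Set.range Sum.inr) = _ from
      if_neg (by decide)
  rw [e0] at hm0
  rw [e1] at hm1
  obtain ⟨a, rfl⟩ := hm0
  obtain ⟨b, rfl⟩ := hm1
  refine ⟨a, b, funext fun s => ?_, funext fun s => ?_⟩
  · rw [hu0 s none rfl, hc0]
  · rw [hu1 s none rfl, hc1]

lemma run_state {r : ℕ → GState (Fin 2) (Option (M0 × M1)) (M0 ⊕ M1)}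
    (hr : IsRun (gameEnv u0 u1) (SigmaUnifDet (gameEnv u0 u1)) r)
    {a : M0} {b : M1}
    (h0 : (r 0).2 0 = fun _ => ({Sum.inl a} : Set (M0 ⊕ M1)))
    (h1 : (r 0).2 1 = fun _ => ({Sum.inr b} : Set (M0 ⊕ M1))) :
    ∀ m, (r (m + 1)).1 = some (a, b) := by
  intro m
  induction m with
  | zero =>
    obtain ⟨-, act, hact, htr⟩ := hr.2.2 0
    have hr0 : (r 0).1 = none := hr.1
    rw [hr0] at htr
    cases h : (r 1).1 with
    | none => rw [h] at htr; exact htr.elim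
    | some p =>
      rw [h] at htr
      obtain ⟨ht0, ht1⟩ := htr
      have ha0 := hact 0
      have ha1 := hact 1
      rw [hr0, h0, ht0] at ha0
      rw [hr0, h1, ht1] at ha1
      have e0 : p.1 = a := Sum.inl.inj ha0
      have e1 : p.2 = b := Sum.inr.inj ha1
      rw [← e0, ← e1]
  | succ m ih =>
    obtain ⟨-, act, hact, htr⟩ := hr.2.2 (m + 1)
    rw [ih] at htr
    cases h : (r (m + 1 + 1)).1 with
    | none => rw [h] at htr; exact htr.elim
    | some p =>
        rw [h] at htr
        exact congrArg some ((htr : (a, b) = p)).symm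

end GameAux
section SemAux
variable {M0 M1 V : Type}

lemma sameLoc_str {State Act PropV : Type} {E : Env (Fin 2) State Unit Act PropV}
    {Sig : Set (JointStrategy (Fin 2) State Act)} {i : Fin 2}
    {g g' : GState (Fin 2) State Act} :
    (stratSpace E Sig).sameLoc (SIdx.str i) g g' ↔ g.2 i = g'.2 i := by
  constructor
  · intro h
    have h' : (Sum.inr (Sum.inr (g.2 i)) : State ⊕ Unit ⊕ Strategy State Act) =
        Sum.inr (Sum.inr (g'.2 i)) := h
    exact Sum.inr.inj (Sum.inr.inj h')
  · intro h
    show (Sum.inr (Sum.inr (g.2 i)) : State ⊕ Unit ⊕ Strategy State Act) =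
      Sum.inr (Sum.inr (g'.2 i))
    rw [h]

lemma esat_BR [Fintype V] [LinearOrder V] {Gl Loc : Type}
    (M : IS Gl (SIdx (Fin 2)) Loc (Fin 2 × V)) (i : Fin 2) (Γ : Unit → Gl)
    (r : ℕ → Gl) (m : ℕ) :
    esat M (BR i) Γ r m ↔ ∃ v : V, esat M (BRv i v) Γ r m := by
  rw [BR, esat_bigDisj]
  constructor
  · rintro ⟨φ, hφ, h⟩
    obtain ⟨v, -, rfl⟩ := List.mem_map.mp hφ
    exact ⟨v, h⟩
  · rintro ⟨v, h⟩
    exact ⟨BRv i v, List.mem_map.mpr ⟨v, by simp, rfl⟩, h⟩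

lemma esat_BRguard [Fintype V] [LinearOrder V] {Gl Loc : Type}
    (M : IS Gl (SIdx (Fin 2)) Loc (Fin 2 × V)) (i : Fin 2) (v : V) (Γ : Unit → Gl)
    (r : ℕ → Gl) (m : ℕ) :
    esat M (bigConj ((Finset.univ : Finset V).toList.map fun v' =>
      if v' ≤ v then ESL.tt else ESL.neg (Uform i v'))) Γ r m ↔
    ∀ v', ¬ v' ≤ v → ¬ esat M (Uform i v') Γ r m := by
  rw [esat_bigConj]
  constructor
  · intro h v' hv'
    have := h _ (List.mem_map.mpr ⟨v', by simp, rfl⟩)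
    rw [if_neg hv'] at this
    exact this
  · intro h φ hφ
    obtain ⟨v', -, rfl⟩ := List.mem_map.mp hφ
    by_cases hle : v' ≤ v
    · rw [if_pos hle]; trivial
    · rw [if_neg hle]; exact h v' hle

end SemAux
/-- a finite two-player strategic game has a pure Nash
equilibrium iff `Env_𝒢, Σ^{unif,det}(Env_𝒢) ⊨ ¬D_∅¬(BR₀ ∧ BR₁)`. -/
theorem nash_iff_formula
    [Fintype M0] [Fintype M1] [Nonempty M0] [Nonempty M1]
    [Fintype V] [LinearOrder V]
    (u0 u1 : M0 → M1 → V)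
    (Γ : Unit → GState (Fin 2) (Option (M0 × M1)) (M0 ⊕ M1)) :
    (∃ (a : M0) (b : M1),
        (∀ a' : M0, u0 a' b ≤ u0 a b) ∧ (∀ b' : M1, u1 a b' ≤ u1 a b)) ↔
      ∀ r ∈ (stratSpace (gameEnv u0 u1) (SigmaUnifDet (gameEnv u0 u1))).runs,
        esat (stratSpace (gameEnv u0 u1) (SigmaUnifDet (gameEnv u0 u1)))
          (.neg (.dk (∅ : Set (SIdx (Fin 2))) (.neg (.conj (BR 0) (BR 1))))) Γ r 0 := by
  have hone : (1 - 0 : Fin 2) = 1 := by decide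
  have hzro : (1 - 1 : Fin 2) = 0 := by decide
  constructor
  · rintro ⟨a, b, hA, hB⟩ r hr
    intro hd
    refine hd (mkRun a b) (mkRun_mem u0 u1 a b) 0
      (fun i hi => absurd hi (Set.notMem_empty i)) ⟨?_, ?_⟩
    · -- BR 0 at (mkRun a b, 0)
      rw [esat_BR]
      refine ⟨u0 a b, Or.inl rfl, ?_⟩
      intro r' hr' m' hsame
      have hsl := hsame (SIdx.str (1 - 0)) rfl
      rw [hone] at hsl
      obtain ⟨a', b', h0', h1'⟩ := strat_struct u0 u1 hr'.2.1
      have hb : b' = b := by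
        have h1m : (r' 0).2 1 = mkStrat a b 1 := by
          rw [← run_strat_const hr' m']
          exact sameLoc_str.mp hsl
        rw [h1', mkStrat_one] at h1m
        exact Sum.inr.inj (Set.singleton_eq_singleton_iff.mp (congrFun h1m none))
      rw [esat_BRguard]
      intro v' hv' hU
      have hU' : ((0 : Fin 2), v') = ((0 : Fin 2), u0 a' b') ∨
          ((0 : Fin 2), v') = ((1 : Fin 2), u1 a' b') := by
        have h1 : ((0 : Fin 2), v') ∈ (gameEnv u0 u1).val ((r' (m' + 1)).1) := hU
        rw [run_state u0 u1 hr' h0' h1' m'] at h1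
        exact h1
      rcases hU' with hh | hh
      · have h2 : v' = u0 a' b' := (Prod.ext_iff.mp hh).2
        have hv : v' = u0 a' b := by rw [h2, hb]
        exact hv' (by rw [hv]; exact hA a')
      · have h1 : (0 : Fin 2) = 1 := (Prod.ext_iff.mp hh).1
        exact absurd h1 (by decide)
    · -- BR 1 at (mkRun a b, 0)
      rw [esat_BR]
      refine ⟨u1 a b, Or.inr rfl, ?_⟩
      intro r' hr' m' hsame
      have hsl := hsame (SIdx.str (1 - 1)) rfl
      rw [hzro] at hsl
      obtain ⟨a', b', h0', h1'⟩ := strat_struct u0 u1 hr'.2.1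
      have ha : a' = a := by
        have h0m : (r' 0).2 0 = mkStrat a b 0 := by
          rw [← run_strat_const hr' m']
          exact sameLoc_str.mp hsl
        rw [h0', mkStrat_zero] at h0m
        exact Sum.inl.inj (Set.singleton_eq_singleton_iff.mp (congrFun h0m none))
      rw [esat_BRguard]
      intro v' hv' hU
      have hU' : ((1 : Fin 2), v') = ((0 : Fin 2), u0 a' b') ∨
          ((1 : Fin 2), v') = ((1 : Fin 2), u1 a' b') := by
        have h1 : ((1 : Fin 2), v') ∈ (gameEnv u0 u1).val ((r' (m' + 1)).1) := hU
        rw [run_state u0 u1 hr' h0' h1' m'] at h1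
        exact h1
      rcases hU' with hh | hh
      · have h1 : (1 : Fin 2) = 0 := (Prod.ext_iff.mp hh).1
        exact absurd h1 (by decide)
      · have h2 : v' = u1 a' b' := (Prod.ext_iff.mp hh).2
        have hv : v' = u1 a b' := by rw [h2, ha]
        exact hv' (by rw [hv]; exact hB b')
  · intro h
    by_contra hne
    have hr0 := mkRun_mem u0 u1 (Classical.arbitrary M0) (Classical.arbitrary M1)
    apply h _ hr0
    intro r' hr' m' _ hconj
    apply hne
    obtain ⟨hBR0, hBR1⟩ := hconj
    obtain ⟨a, b, h0', h1'⟩ := strat_struct u0 u1 hr'.2.1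
    have hst := run_state u0 u1 hr' h0' h1' m'
    refine ⟨a, b, ?_, ?_⟩
    · intro a'
      rw [esat_BR] at hBR0
      obtain ⟨v, hU, hD⟩ := hBR0
      have hU' : ((0 : Fin 2), v) = ((0 : Fin 2), u0 a b) ∨
          ((0 : Fin 2), v) = ((1 : Fin 2), u1 a b) := by
        have h1 : ((0 : Fin 2), v) ∈ (gameEnv u0 u1).val ((r' (m' + 1)).1) := hU
        rw [hst] at h1
        exact h1
      have hv : v = u0 a b := by
        rcases hU' with hh | hh
        · exact (Prod.ext_iff.mp hh).2
        · have h1 : (0 : Fin 2) = 1 := (Prod.ext_iff.mp hh).1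
          exact absurd h1 (by decide)
      have hcond : ∀ i ∈ ({SIdx.str (1 - 0)} : Set (SIdx (Fin 2))),
          (stratSpace (gameEnv u0 u1) (SigmaUnifDet (gameEnv u0 u1))).sameLoc i
            (mkRun a' b 0) (r' m') := by
        intro i hi
        rw [Set.mem_singleton_iff] at hi
        subst hi
        rw [hone]
        apply sameLoc_str.mpr
        show mkStrat a' b 1 = (r' m').2 1
        rw [mkStrat_one, run_strat_const hr' m', h1']
      have hguard := hD (mkRun a' b) (mkRun_mem u0 u1 a' b) 0 hcond
      rw [esat_BRguard] at hguard
      by_contra hle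
      refine hguard (u0 a' b) (by rw [hv]; exact hle) ?_
      exact Or.inl rfl
    · intro b'
      rw [esat_BR] at hBR1
      obtain ⟨v, hU, hD⟩ := hBR1
      have hU' : ((1 : Fin 2), v) = ((0 : Fin 2), u0 a b) ∨
          ((1 : Fin 2), v) = ((1 : Fin 2), u1 a b) := by
        have h1 : ((1 : Fin 2), v) ∈ (gameEnv u0 u1).val ((r' (m' + 1)).1) := hU
        rw [hst] at h1
        exact h1
      have hv : v = u1 a b := by
        rcases hU' with hh | hh
        · have h1 : (1 : Fin 2) = 0 := (Prod.ext_iff.mp hh).1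
          exact absurd h1 (by decide)
        · exact (Prod.ext_iff.mp hh).2
      have hcond : ∀ i ∈ ({SIdx.str (1 - 1)} : Set (SIdx (Fin 2))),
          (stratSpace (gameEnv u0 u1) (SigmaUnifDet (gameEnv u0 u1))).sameLoc i
            (mkRun a b' 0) (r' m') := by
        intro i hi
        rw [Set.mem_singleton_iff] at hi
        subst hi
        rw [hzro]
        apply sameLoc_str.mpr
        show mkStrat a b' 0 = (r' m').2 0
        rw [mkStrat_zero, run_strat_const hr' m', h0']
      have hguard := hD (mkRun a b') (mkRun_mem u0 u1 a b') 0 hcond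
      rw [esat_BRguard] at hguard
      by_contra hle
      refine hguard (u1 a b') (by rw [hv]; exact hle) ?_
      exact Or.inr rfl

end Paper
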